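/- The least fixpoints of the operators on interpretations satisfy lfp(Γ_s Γ) = lfp(Γ_s Γ_s) ⊆ lfp(Γ Γ) ⊆ lfp(Γ Γ_s), corresponding via the argumentation equivalence to J_{a/u} = J_{a/a} ⊆ J_{u/u} ⊆ J_{u/a}. -/

import Mathlib

/-- Objective literals: atoms and their explicit negations. -/
inductive Lit : Type where
  | pos : String → Lit
  | neg : String → Lit
deriving DecidableEq

/-- Explicit negation of an objective literal (`¬¬L = L`). -/
def Lit.compl : Lit → Lit
  | .pos a => .neg a
  | .neg a => .pos a

/-- A rule `head ← pos, not neg` of an extended logic program: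
`pos` are the objective body literals and `neg` the default-negated ones. -/
structure Rule where
  head : Lit
  pos : List Lit
  neg : List Lit

/-- An extended logic program is a set of rules. -/
abbrev Program := Set Rule

/-- An argument for `P`: a finite sequence of rules of `P` such that every
objective literal in the body of a rule is the head of a later rule. -/
def IsArg (P : Program) (A : List Rule) : Prop :=
  (∀ r ∈ A, r ∈ P) ∧
  ∀ i : Fin A.length, ∀ L ∈ (A.get i).pos,
    ∃ k : Fin A.length, i < k ∧ (A.get k).head = L

/-- The conclusions of an argument: the heads of its rules. -/
def conc (A : List Rule) : Set Lit := {L | ∃ r ∈ A, r.head = L}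

/-- The assumptions of an argument: the objective literals `L` such that
`not L` occurs in the body of one of its rules. -/
def assm (A : List Rule) : Set Lit := {L | ∃ r ∈ A, L ∈ r.neg}

/-- `A` is a minimal argument for `L`: no proper subargument of `A` has
conclusion `L`. -/
def MinimalArgFor (P : Program) (A : List Rule) (L : Lit) : Prop :=
  IsArg P A ∧ L ∈ conc A ∧
  ∀ B : List Rule, B.Sublist A → B ≠ A → IsArg P B → L ∉ conc B

/-- The set of minimal arguments of `P`. -/
def Args (P : Program) : Type := {A : List Rule // ∃ L, MinimalArgFor P A L}

/-- `A` undercuts `B`: some conclusion `L` of `A` is an assumption `not L` of `B`. -/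
def undercuts {P : Program} (A B : Args P) : Prop :=
  ∃ L, L ∈ conc A.1 ∧ L ∈ assm B.1

/-- `A` rebuts `B`: some conclusion `L` of `A` has `¬L` a conclusion of `B`. -/
def rebuts {P : Program} (A B : Args P) : Prop :=
  ∃ L, L ∈ conc A.1 ∧ L.compl ∈ conc B.1

/-- `A` attacks `B` iff `A` undercuts or rebuts `B`. -/
def attacks {P : Program} (A B : Args P) : Prop := undercuts A B ∨ rebuts A B

/-- `A` defeats `B` iff `A` undercuts `B`, or `A` rebuts `B` and `B` does not
undercut `A`. -/
def defeats {P : Program} (A B : Args P) : Prop :=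
  undercuts A B ∨ (rebuts A B ∧ ¬ undercuts B A)

/-- `A` strongly undercuts `B` iff `A` undercuts `B` and `B` does not undercut `A`. -/
def sundercuts {P : Program} (A B : Args P) : Prop :=
  undercuts A B ∧ ¬ undercuts B A

/-- The set of `x/y`-acceptable arguments with respect to `S`. -/
def Facc {Arg : Type*} (x y : Arg → Arg → Prop) (S : Set Arg) : Set Arg :=
  {A | ∀ B, x B A → ∃ C ∈ S, y C B}

theorem Facc_mono {Arg : Type*} (x y : Arg → Arg → Prop) : Monotone (Facc x y) := by
  intro S T hST A hA B hB
  obtain ⟨C, hC, hCB⟩ := hA B hB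
  exact ⟨C, hST hC, hCB⟩

/-- `Facc` as an order homomorphism. -/
def Fhom {Arg : Type*} (x y : Arg → Arg → Prop) : Set Arg →o Set Arg :=
  ⟨Facc x y, Facc_mono x y⟩

/-- The set of `x/y`-justified arguments. -/
def Jlfp {Arg : Type*} (x y : Arg → Arg → Prop) : Set Arg :=
  OrderHom.lfp (Fhom x y)

/-- Derivability in the least model of the GL-transformation `P/I`:
rules whose default-negated body literals avoid `I` may fire. -/
inductive GammaDeriv (P : Program) (I : Set Lit) : Lit → Prop where
  | step (r : Rule) (hr : r ∈ P) (hneg : ∀ L ∈ r.neg, L ∉ I)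
      (hpos : ∀ L ∈ r.pos, GammaDeriv P I L) : GammaDeriv P I r.head

/-- The Gelfond–Lifschitz operator `Γ_P`. -/
def Gamma (P : Program) (I : Set Lit) : Set Lit := {L | GammaDeriv P I L}

/-- The semi-normal version of `P`: each rule `L ← Body` becomes
`L ← not ¬L, Body`. -/
def seminormal (P : Program) : Program :=
  {r' | ∃ r ∈ P, r' = ⟨r.head, r.pos, r.head.compl :: r.neg⟩}

/-- `Γ_s`, the `Γ` operator of the semi-normal program. -/
def GammaS (P : Program) (I : Set Lit) : Set Lit := Gamma (seminormal P) I

theorem Gamma_anti (P : Program) : ∀ {I I' : Set Lit}, I ⊆ I' → Gamma P I' ⊆ Gamma P I := by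
  intro I I' h L hL
  induction hL with
  | step r hr hneg hpos ih =>
      exact GammaDeriv.step r hr (fun L hL hI => hneg L hL (h hI)) ih

/-- The monotone operator `I ↦ Γ_P (Γ_Q I)`. -/
def GammaComp (P Q : Program) : Set Lit →o Set Lit :=
  ⟨fun I => Gamma P (Gamma Q I), fun _ _ h => Gamma_anti P (Gamma_anti Q h)⟩

theorem Lit.compl_compl' (L : Lit) : L.compl.compl = L := by
  cases L <;> rfl

/-- Semi-normal derivations are derivations of the original program. -/
theorem seminormal_sub (P : Program) {I : Set Lit} :
    Gamma (seminormal P) I ⊆ Gamma P I := by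
  intro L hL
  induction hL with
  | step r' hr' hneg hpos ih =>
      obtain ⟨r, hr, rfl⟩ := hr'
      exact GammaDeriv.step r hr (fun M hM => hneg M (List.mem_cons_of_mem _ hM))
        (fun M hM => ih M hM)

/-- A literal derived semi-normally has its complement outside `I`. -/
theorem gammaS_compl (P : Program) {I : Set Lit} {L : Lit}
    (h : L ∈ Gamma (seminormal P) I) : L.compl ∉ I := by
  cases h with
  | step r' hr' hneg _ =>
      obtain ⟨r, _, rfl⟩ := hr'
      exact hneg _ List.mem_cons_self

/-- Rebutting is symmetric. -/
theorem rebuts_symm {P : Program} {A B : Args P} (h : rebuts A B) : rebuts B A := by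
  obtain ⟨L, hA, hB⟩ := h
  exact ⟨L.compl, hB, by rw [Lit.compl_compl']; exact hA⟩

/-- Ordering of the least fixpoints of the compositions of `Γ` and `Γ_s`,
corresponding to the argumentation semantics
`J_{a/u} = J_{a/a} ⊆ J_{u/u} ⊆ J_{u/a}`. -/
theorem gamma_lfp_hierarchy (P : Program) :
    (OrderHom.lfp (GammaComp (seminormal P) P) =
      OrderHom.lfp (GammaComp (seminormal P) (seminormal P)) ∧
     OrderHom.lfp (GammaComp (seminormal P) (seminormal P)) ⊆
      OrderHom.lfp (GammaComp P P) ∧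
     OrderHom.lfp (GammaComp P P) ⊆
      OrderHom.lfp (GammaComp P (seminormal P))) ∧
    (Jlfp (attacks (P := P)) undercuts = Jlfp attacks attacks ∧
     Jlfp (attacks (P := P)) attacks ⊆ Jlfp undercuts undercuts ∧
     Jlfp (undercuts (P := P)) undercuts ⊆ Jlfp undercuts attacks) := by
  constructor
  · -- Γ side
    set A := OrderHom.lfp (GammaComp (seminormal P) P) with hAdef
    have hA : Gamma (seminormal P) (Gamma P A) = A :=
      OrderHom.map_lfp (GammaComp (seminormal P) P)
    have key : Gamma P A ⊆ GammaS P A := by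
      intro L hL
      induction hL with
      | step r hr hneg hpos ih =>
          refine GammaDeriv.step ⟨r.head, r.pos, r.head.compl :: r.neg⟩
            ⟨r, hr, rfl⟩ ?_ ih
          intro M hM
          rcases List.mem_cons.mp hM with hM | hM
          · subst hM
            intro hmem
            rw [← hA] at hmem
            have := gammaS_compl P hmem
            rw [Lit.compl_compl'] at this
            exact this (GammaDeriv.step r hr hneg hpos)
          · exact hneg M hM
    refine ⟨le_antisymm ?_ ?_, ?_, ?_⟩
    · -- lfp(Γs Γ) ≤ lfp(Γs Γs)
      refine OrderHom.lfp.monotone ?_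
      intro I
      exact Gamma_anti (seminormal P) (seminormal_sub P (I := I))
    · -- lfp(Γs Γs) ≤ A
      refine OrderHom.lfp_le _ ?_
      calc GammaS P (GammaS P A) ⊆ GammaS P (Gamma P A) :=
            Gamma_anti (seminormal P) key
        _ = A := hA
    · -- lfp(Γs Γs) ⊆ lfp(Γ Γ)
      have h1 : OrderHom.lfp (GammaComp (seminormal P) (seminormal P)) ≤
          OrderHom.lfp (GammaComp (seminormal P) P) := by
        refine OrderHom.lfp_le _ ?_
        calc GammaS P (GammaS P A) ⊆ GammaS P (Gamma P A) :=
              Gamma_anti (seminormal P) key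
          _ = A := hA
      refine le_trans h1 (OrderHom.lfp_le _ ?_)
      calc Gamma (seminormal P)
            (Gamma P (OrderHom.lfp (GammaComp P P))) ⊆
          Gamma P (Gamma P (OrderHom.lfp (GammaComp P P))) := seminormal_sub P
        _ = OrderHom.lfp (GammaComp P P) := OrderHom.map_lfp (GammaComp P P)
    · -- lfp(Γ Γ) ⊆ lfp(Γ Γs)
      refine OrderHom.lfp_le _ ?_
      set N := OrderHom.lfp (GammaComp P (seminormal P)) with hN
      calc Gamma P (Gamma P N) ⊆ Gamma P (GammaS P N) :=
            Gamma_anti P (seminormal_sub P)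
        _ = N := OrderHom.map_lfp (GammaComp P (seminormal P))
  · -- argumentation side
    set J := Jlfp (attacks (P := P)) undercuts with hJdef
    have hJ : Facc attacks undercuts J = J := OrderHom.map_lfp (Fhom attacks undercuts)
    have key : Facc (attacks (P := P)) attacks J ⊆ J := by
      intro Aa hAa
      rw [← hJ]
      intro B hB
      obtain ⟨C, hC, hCB⟩ := hAa B hB
      rcases hCB with h | h
      · exact ⟨C, hC, h⟩
      · -- C rebuts B, so B attacks C; C ∈ J is defended by an undercutter of B
        have hBC : attacks B C := Or.inr (rebuts_symm h)
        have := hC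
        rw [← hJ] at this
        exact this B hBC
    refine ⟨le_antisymm ?_ ?_, ?_, ?_⟩
    · -- Jlfp a u ≤ Jlfp a a
      refine OrderHom.lfp.monotone ?_
      intro S Aa hAa B hB
      obtain ⟨C, hC, hCB⟩ := hAa B hB
      exact ⟨C, hC, Or.inl hCB⟩
    · -- Jlfp a a ≤ J
      exact OrderHom.lfp_le _ (by simpa [hJdef, Jlfp, Fhom] using key)
    · -- Jlfp a a ⊆ Jlfp u u
      have h1 : Jlfp (attacks (P := P)) attacks ⊆ J :=
        OrderHom.lfp_le _ (by simpa [hJdef, Jlfp, Fhom] using key)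
      refine le_trans h1 (OrderHom.lfp.monotone ?_)
      intro S Aa hAa B hB
      obtain ⟨C, hC, hCB⟩ := hAa B (Or.inl hB)
      exact ⟨C, hC, hCB⟩
    · -- Jlfp u u ⊆ Jlfp u a
      refine OrderHom.lfp.monotone ?_
      intro S Aa hAa B hB
      obtain ⟨C, hC, hCB⟩ := hAa B hB
      exact ⟨C, hC, Or.inl hCB⟩
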